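/- There exists c < ∞ such that for all R ≥ 1 and all z ∈ ℤ² ∖ ℤ₊ with |z| ≤ 4R: E^z[ σ_{4R} ∧ τ_+ ] ≤ c · sin(θ_z/2) · R². -/

import Mathlib

open Filter
open scoped Classical

namespace LERW

/-- The lattice `ℤ² = ℤ + iℤ`. -/
abbrev V : Type := ℤ × ℤ

/-- Embedding of the lattice into `ℂ`. -/
noncomputable def toC (z : V) : ℂ := (z.1 : ℂ) + (z.2 : ℂ) * Complex.I

/-- Euclidean norm of a lattice point. -/
noncomputable def nrm (z : V) : ℝ := ‖toC z‖

/-- Euclidean diameter of a set of lattice points. -/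
noncomputable def diamV (K : Set V) : ℝ := Metric.diam (toC '' K)

/-- Lattice adjacency. -/
def adj (z w : V) : Prop := (z.1 - w.1).natAbs + (z.2 - w.2).natAbs = 1

/-- A (nearest-neighbor) walk: a nonempty list of consecutively adjacent points. -/
def IsWalk (ω : List V) : Prop := ω ≠ [] ∧ ω.Chain' adj

def starts (ω : List V) (z : V) : Prop := ω.head? = some z

def ends (ω : List V) (w : V) : Prop := ω.getLast? = some w

/-- The simple random walk weight `4^{-(number of steps)}` of a walk. -/
noncomputable def pweight (ω : List V) : ℝ := (1 / 4 : ℝ) ^ (ω.length - 1)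

/-- The zipper edges `{k, k - i}`, `k ≥ 1`, crossing just below the positive real axis. -/
def zipper (a b : V) : Prop :=
  a.1 = b.1 ∧ 1 ≤ a.1 ∧ ((a.2 = 0 ∧ b.2 = -1) ∨ (a.2 = -1 ∧ b.2 = 0))

/-- The sign `(-1)^{number of zipper crossings}` of a walk. -/
noncomputable def qsign (ω : List V) : ℝ :=
  (-1 : ℝ) ^ ((ω.zip ω.tail).countP fun e => decide (zipper e.1 e.2))

/-- Walks from `z` to `w`, otherwise staying in `A`. -/
def WalkTo (A : Set V) (z w : V) (ω : List V) : Prop :=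
  IsWalk ω ∧ starts ω z ∧ ends ω w ∧ ∀ x ∈ ω.dropLast, x ∈ A

/-- The Poisson kernel `H_A(z,w) = P^z{S_{τ_A} = w}` for `z ∈ A`, `w ∉ A`,
and `1{z = w}` for `z ∉ A`. -/
noncomputable def H (A : Set V) (z w : V) : ℝ :=
  if z ∈ A then ∑' ω : {ω : List V // WalkTo A z w ω}, pweight ω.1
  else if z = w then 1 else 0

/-- The signed (zipper) Poisson kernel
`H^q_A(z,w) = E^z[(-1)^{Q_{τ_A}} 1{S_{τ_A} = w}]` for `z ∈ A`, `w ∉ A`,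
and `1{z = w}` for `z ∉ A`. -/
noncomputable def Hq (A : Set V) (z w : V) : ℝ :=
  if z ∈ A then ∑' ω : {ω : List V // WalkTo A z w ω}, qsign ω.1 * pweight ω.1
  else if z = w then 1 else 0

/-- Walks from `z` to `w` staying in `A`. -/
def WalkIn (A : Set V) (z w : V) (ω : List V) : Prop :=
  IsWalk ω ∧ starts ω z ∧ ends ω w ∧ ∀ x ∈ ω, x ∈ A

/-- The Green's function `G_A(z,w)` of simple random walk in `A`: the expected
number of visits to `w` strictly before `τ_A` by the walk started at `z`. -/
noncomputable def G (A : Set V) (z w : V) : ℝ :=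
  ∑' ω : {ω : List V // WalkIn A z w ω}, pweight ω.1

/-- Walks started at `z`, stopped at the exit time of `B`. -/
def StoppedWalk (B : Set V) (z : V) (ω : List V) : Prop :=
  IsWalk ω ∧ starts ω z ∧ (∀ x ∈ ω.dropLast, x ∈ B) ∧ ∀ w, ends ω w → w ∉ B

noncomputable def lastVal (f : V → ℝ) (ω : List V) : ℝ := (ω.getLast?.map f).getD 0

/-- `E^z[f(S_{τ_B})]`, the expectation of `f` at the exit point of `B`. -/
noncomputable def exitExp (B : Set V) (z : V) (f : V → ℝ) : ℝ :=
  ∑' ω : {ω : List V // StoppedWalk B z ω}, pweight ω.1 * lastVal f ω.1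

/-- `ℤ₊`, the lattice points on the nonnegative real axis. -/
def Zplus : Set V := {z | 0 ≤ z.1 ∧ z.2 = 0}

/-- The discrete disk `D_R`. -/
def ballV (R : ℝ) : Set V := {z | nrm z < R}

/-- The set `D_R ∖ ℤ₊`, whose exit time is `σ_R ∧ τ_+`. -/
def contSet (R : ℝ) : Set V := {z | nrm z < R ∧ z ∉ Zplus}

/-- `P^z{σ_R < τ_+}`. -/
noncomputable def probEscape (z : V) (R : ℝ) : ℝ :=
  exitExp (contSet R) z fun w => if w ∈ Zplus then 0 else 1

/-- The outer boundary `∂A`: the points of `ℤ² ∖ A` adjacent to `A`. -/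
def bdry (A : Set V) : Set V := {w | w ∉ A ∧ ∃ z ∈ A, adj z w}

/-- The discrete circle `C_R = ∂D_R`. -/
def circ (R : ℝ) : Set V := bdry (ballV R)

/-- `θ_z = arg z ∈ [0, 2π)`. -/
noncomputable def theta (z : V) : ℝ :=
  if 0 ≤ (toC z).arg then (toC z).arg else (toC z).arg + 2 * Real.pi

/-- `f(z) = Im √z = |z|^{1/2} sin(θ_z/2)`. -/
noncomputable def fIm (z : V) : ℝ := Real.sqrt (nrm z) * Real.sin (theta z / 2)

/-- `v(z) = lim_{R→∞} R^{1/2} P^z{σ_R < τ_+}` (the limit exists). -/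
noncomputable def v (z : V) : ℝ :=
  limUnder atTop fun R : ℝ => Real.sqrt R * probEscape z R

/-- The four lattice neighbors of a point. -/
def nbrs (z : V) : List V := [(z.1 + 1, z.2), (z.1 - 1, z.2), (z.1, z.2 + 1), (z.1, z.2 - 1)]

/-- The discrete Laplacian `Lg(z) = ¼ ∑_{|w-z|=1} g(w) - g(z)`. -/
noncomputable def Lap (g : V → ℝ) (z : V) : ℝ := (1 / 4 : ℝ) * ((nbrs z).map g).sum - g z

/-- The boundary Poisson kernel `H_{∂A}(x,y) = ¼ ∑_{x' ∈ A, x' ~ x} H_A(x',y)`. -/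
noncomputable def Hbd (A : Set V) (x y : V) : ℝ :=
  (1 / 4 : ℝ) * ((nbrs x).map fun x' => if x' ∈ A then H A x' y else 0).sum

/-- `H_A(z,E) = ∑_{w ∈ E} H_A(z,w)`. -/
noncomputable def HSet (A : Set V) (z : V) (E : Set V) : ℝ := ∑' w : E, H A z w.1

/-- `H_{∂A}(x,E) = ∑_{y ∈ E} H_{∂A}(x,y)`. -/
noncomputable def HbdSet (A : Set V) (x : V) (E : Set V) : ℝ := ∑' w : E, Hbd A x w.1

/-- `U_R`, the square of side `2R` centered at the origin. -/
def squ (R : ℝ) : Set V := {z | |(z.1 : ℝ)| < R ∧ |(z.2 : ℝ)| < R}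

/-- The segment `{0, 1, …, R}` on the nonnegative real axis. -/
def seg (R : ℝ) : Set V := {z | 0 ≤ z.1 ∧ (z.1 : ℝ) ≤ R ∧ z.2 = 0}

/-- The slit square `U_R^- = U_R ∖ {0, 1, …, R}`. -/
def Uminus (R : ℝ) : Set V := squ R \ seg R

/-- Distance from `z` to the set `{R, R+iR, R-iR, -R+iR, -R-iR}`. -/
noncomputable def cornerDist (R : ℝ) (z : V) : ℝ :=
  Metric.infDist (toC z)
    {(R : ℂ), (R : ℂ) + (R : ℂ) * Complex.I, (R : ℂ) - (R : ℂ) * Complex.I,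
      -(R : ℂ) + (R : ℂ) * Complex.I, -(R : ℂ) - (R : ℂ) * Complex.I}

/-- A self-avoiding walk through the origin: pairwise distinct, consecutively
adjacent lattice points, one of which is `0`. -/
def IsSAW0 (η : List V) : Prop := η.Chain' adj ∧ η.Nodup ∧ ((0, 0) : V) ∈ η

/-- The vertex set of a SAW. -/
def sawSet (η : List V) : Set V := {x | x ∈ η}

/-- `v_η(z) = v(z) - ∑_{y ∈ η} H^q_{ℤ²∖η}(z,y) v(y)`. -/
noncomputable def vEta (η : List V) (z : V) : ℝ :=
  v z - ∑ y ∈ η.toFinset, Hq (sawSet η)ᶜ z y * v y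

/-- The discrete harmonic conjugate `u` of `v`. -/
noncomputable def uFn (z : V) : ℝ := if 0 ≤ z.2 then v (-z.1, z.2) else -v (-z.1, z.2)

/-- `u_η(z) = u(z) - ∑_{y ∈ η} H^q_{ℤ²∖η}(z,y) u(y)`. -/
noncomputable def uEta (η : List V) (z : V) : ℝ :=
  uFn z - ∑ y ∈ η.toFinset, Hq (sawSet η)ᶜ z y * uFn y

/-- Complex conjugation on the lattice. -/
def conjV (w : V) : V := (w.1, -w.2)

/-- `h_m^η(z,w) = ½ [H^q_{D_m∖η}(z,w) + H^q_{D_m∖η}(z,w̄)]`. -/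
noncomputable def hEta (η : List V) (m : ℝ) (z w : V) : ℝ :=
  (Hq (ballV m \ sawSet η) z w + Hq (ballV m \ sawSet η) z (conjV w)) / 2

/-- `P^z{S(σ_m ∧ τ_+) = w}`. -/
noncomputable def hitPt (m : ℝ) (z w : V) : ℝ :=
  exitExp (contSet m) z fun x => if x = w then 1 else 0

/-- `μ_m(w) = ½ [P^{-1}{S(σ_m ∧ τ_+) = w} + P^{-1}{S(σ_m ∧ τ_+) = w̄}] / P^{-1}{σ_m < τ_+}`. -/
noncomputable def mu (m : ℝ) (w : V) : ℝ :=
  ((hitPt m (-1, 0) w + hitPt m (-1, 0) (conjV w)) / 2) / probEscape (-1, 0) m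

/-- `P^z{σ_R < τ_+, S(σ_R) = w}`. -/
noncomputable def escHit (z : V) (R : ℝ) (w : V) : ℝ :=
  exitExp (contSet R) z fun x => if x = w ∧ x ∉ Zplus then 1 else 0

/-- The infinite vertical strip `A_n = {x + iy : |x| < n}`. -/
def strip (n : ℝ) : Set V := {z | |(z.1 : ℝ)| < n}

/-- `v_η^{(n)}(z) = H^q_{A_n∖η}(z, -n)`. -/
noncomputable def vEtaN (η : List V) (n : ℕ) (z : V) : ℝ :=
  Hq (strip n \ sawSet η) z (-(n : ℤ), 0)

/-- `u_η^{(n)}(z) = H^q_{A_n∖η}(z, n)`. -/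
noncomputable def uEtaN (η : List V) (n : ℕ) (z : V) : ℝ :=
  Hq (strip n \ sawSet η) z ((n : ℤ), 0)

/-- `P^z{S_0, …, S_{k-1} ∈ B}`: total weight of walks with `k` vertices from `z`
staying in `B`. -/
noncomputable def stayProb (B : Set V) (z : V) (k : ℕ) : ℝ :=
  ∑' ω : {ω : List V // ω.length = k ∧ IsWalk ω ∧ starts ω z ∧ ∀ x ∈ ω, x ∈ B},
    pweight ω.1

/-- `E^z[τ_B] = ∑_{k ≥ 0} P^z{τ_B > k}`, the expected exit time of `B`. -/
noncomputable def expTime (B : Set V) (z : V) : ℝ := ∑' k : ℕ, stayProb B z (k + 1)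


/-! Part A -/

noncomputable def lstV (ω : List V) : V := ω.getLast?.getD ((0,0) : V)

def WkP (B : Set V) (z : V) (k : ℕ) (ω : List V) : Prop :=
  ω.length = k ∧ IsWalk ω ∧ starts ω z ∧ ∀ x ∈ ω, x ∈ B

abbrev Wk (B : Set V) (z : V) (k : ℕ) := {ω : List V // WkP B z k ω}

lemma stayProb_eq (B : Set V) (z : V) (k : ℕ) :
    stayProb B z k = ∑' ω : Wk B z k, pweight ω.1 := rfl

lemma lstV_concat (l : List V) (w : V) : lstV (l ++ [w]) = w := by
  simp [lstV]

lemma lstV_eq_getLast (l : List V) (h : l ≠ []) : lstV l = l.getLast h := by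
  simp [lstV, List.getLast?_eq_getLast h]

lemma lstV_mem (l : List V) (h : l ≠ []) : lstV l ∈ l := by
  rw [lstV_eq_getLast l h]; exact List.getLast_mem h

lemma adj_mem_nbrs {z w : V} (h : adj z w) : w ∈ nbrs z := by
  unfold adj at h
  simp only [nbrs, List.mem_cons, List.mem_singleton, List.not_mem_nil, or_false]
  have h1 : (z.1 - w.1).natAbs = 1 ∧ z.2 = w.2 ∨ (z.2 - w.2).natAbs = 1 ∧ z.1 = w.1 := by omega
  rcases h1 with ⟨h1, h2⟩ | ⟨h1, h2⟩
  · have : w.1 = z.1 + 1 ∨ w.1 = z.1 - 1 := by omega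
    rcases this with h3 | h3
    · exact Or.inl (Prod.ext_iff.mpr ⟨by omega, by omega⟩)
    · exact Or.inr (Or.inl (Prod.ext_iff.mpr ⟨by omega, by omega⟩))
  · have : w.2 = z.2 + 1 ∨ w.2 = z.2 - 1 := by omega
    rcases this with h3 | h3
    · exact Or.inr (Or.inr (Or.inl (Prod.ext_iff.mpr ⟨by omega, by omega⟩)))
    · exact Or.inr (Or.inr (Or.inr (Prod.ext_iff.mpr ⟨by omega, by omega⟩)))

lemma nbrs_nodup (z : V) : (nbrs z).Nodup := by
  simp [nbrs, Prod.ext_iff]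
  omega

namespace WkP

variable {B : Set V} {z : V} {k : ℕ} {ω : List V} {w : V}

lemma ne_nil (h : WkP B z k ω) : ω ≠ [] := h.2.1.1

lemma last_mem_B (h : WkP B z k ω) : lstV ω ∈ B := h.2.2.2 _ (lstV_mem ω h.ne_nil)

lemma start_mem (h : WkP B z k ω) : z ∈ B := by
  have hh : ω.head? = some z := h.2.2.1
  exact h.2.2.2 z (List.mem_of_mem_head? hh)

lemma concat (h : WkP B z k ω) (hwB : w ∈ B) (hadj : adj (lstV ω) w) :
    WkP B z (k+1) (ω ++ [w]) := by
  obtain ⟨hlen, ⟨hne, hch⟩, hs, hm⟩ := h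
  refine ⟨by simp [hlen], ⟨by simp, ?_⟩, ?_, ?_⟩
  · unfold List.Chain'; rw [List.isChain_append]
    refine ⟨hch, List.isChain_singleton w, ?_⟩
    intro x hx y hy
    rw [List.getLast?_eq_getLast hne] at hx
    simp only [Option.mem_def, Option.some.injEq] at hx
    simp only [List.head?_cons, Option.mem_def, Option.some.injEq] at hy
    subst hx; subst hy
    rwa [lstV_eq_getLast ω hne] at hadj
  · show (ω ++ [w]).head? = some z
    rw [List.head?_append]
    have : ω.head? = some z := hs
    rw [this]; rfl
  · intro x hx
    rcases List.mem_append.mp hx with h | h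
    · exact hm x h
    · simp only [List.mem_singleton] at h; subst h; exact hwB

lemma dropLast_ne_nil (h : WkP B z (k+2) ω) : ω.dropLast ≠ [] := by
  have : ω.dropLast.length = k + 1 := by rw [List.length_dropLast, h.1]; omega
  intro hh; rw [hh] at this; simp at this

lemma drop (h : WkP B z (k+2) ω) : WkP B z (k+1) ω.dropLast := by
  obtain ⟨hlen, ⟨hne, hch⟩, hs, hm⟩ := h
  have hdne : ω.dropLast ≠ [] := by
    have : ω.dropLast.length = k + 1 := by rw [List.length_dropLast, hlen]; omega
    intro hh; rw [hh] at this; simp at this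
  have hdec : ω.dropLast ++ [ω.getLast hne] = ω := List.dropLast_append_getLast hne
  have hch' := hch
  rw [← hdec] at hch'; unfold List.Chain' at hch'; rw [List.isChain_append] at hch'
  refine ⟨by rw [List.length_dropLast, hlen]; omega, ⟨hdne, hch'.1⟩, ?_, ?_⟩
  · show ω.dropLast.head? = some z
    have hs' : ω.head? = some z := hs
    rw [← hdec, List.head?_append] at hs'
    cases hh : ω.dropLast.head? with
    | none => exact absurd (List.head?_eq_none_iff.mp hh) hdne
    | some a => rw [hh] at hs'; simpa using hs'
  · intro x hx; exact hm x ((List.dropLast_sublist ω).subset hx)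

lemma adj_last (h : WkP B z (k+2) ω) : adj (lstV ω.dropLast) (lstV ω) := by
  obtain hne := h.ne_nil
  have hdne := h.dropLast_ne_nil
  have hdec : ω.dropLast ++ [ω.getLast hne] = ω := List.dropLast_append_getLast hne
  have hch' := h.2.1.2
  rw [← hdec] at hch'; unfold List.Chain' at hch'; rw [List.isChain_append] at hch'
  have h3 := hch'.2.2
  rw [lstV_eq_getLast ω hne]
  refine h3 _ ?_ _ ?_
  · rw [List.getLast?_eq_getLast hdne]
    rw [lstV_eq_getLast _ hdne]; rfl
  · rfl

end WkP

/-- The extension equivalence. -/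
noncomputable def extE (B : Set V) (z : V) (n : ℕ) :
    (Σ ω : Wk B z (n+1), {w : V // w ∈ B ∧ adj (lstV ω.1) w}) ≃ Wk B z (n+2) where
  toFun p := ⟨p.1.1 ++ [p.2.1], p.1.2.concat p.2.2.1 p.2.2.2⟩
  invFun q := ⟨⟨q.1.dropLast, q.2.drop⟩, ⟨lstV q.1, q.2.last_mem_B, q.2.adj_last⟩⟩
  left_inv p := by
    obtain ⟨⟨ω, hω⟩, ⟨w, hw⟩⟩ := p
    refine Sigma.ext (Subtype.ext ?_) ?_
    · exact List.dropLast_concat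
    · rw [Subtype.heq_iff_coe_eq ?_]
      · exact lstV_concat ω w
      · intro x
        simp only [List.dropLast_concat]
  right_inv q := by
    refine Subtype.ext ?_
    show q.1.dropLast ++ [lstV q.1] = q.1
    rw [lstV_eq_getLast q.1 q.2.ne_nil]
    exact List.dropLast_append_getLast q.2.ne_nil


open ENNReal in
noncomputable def SE (B : Set V) (z : V) (n : ℕ) : ℝ≥0∞ :=
  ∑' ω : Wk B z n, ENNReal.ofReal (pweight ω.1)

open ENNReal in
noncomputable def TE (B : Set V) (z : V) (φ : V → ℝ) (n : ℕ) : ℝ≥0∞ :=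
  ∑' ω : Wk B z n, ENNReal.ofReal (pweight ω.1 * φ (lstV ω.1))

lemma pweight_nonneg (ω : List V) : 0 ≤ pweight ω := by rw [pweight]; positivity

lemma pweight_of_len {ω : List V} {n : ℕ} (h : ω.length = n) :
    pweight ω = (1/4 : ℝ) ^ (n - 1) := by rw [pweight, h]

lemma nbrs_sum_nonneg (φ : V → ℝ) (hφ0 : ∀ w, 0 ≤ φ w) (l : V) :
    0 ≤ ((nbrs l).map φ).sum := by
  apply List.sum_nonneg
  intro x hx
  rcases List.mem_map.mp hx with ⟨w, _, rfl⟩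
  exact hφ0 w

lemma phi_ge_one (φ : V → ℝ) (hφ0 : ∀ w, 0 ≤ φ w) {l : V} (hsup : Lap φ l ≤ -1) :
    1 ≤ φ l := by
  have h1 := nbrs_sum_nonneg φ hφ0 l
  unfold Lap at hsup
  nlinarith

lemma inner_step (B : Set V) (φ : V → ℝ) (hφ0 : ∀ w, 0 ≤ φ w)
    (l : V) (hsup : Lap φ l ≤ -1) (n : ℕ) :
    ∑' w : {w : V // w ∈ B ∧ adj l w}, ENNReal.ofReal ((1/4:ℝ)^(n+1) * φ w.1)
      ≤ ENNReal.ofReal ((1/4:ℝ)^n * (φ l - 1)) := by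
  have hsum : (1/4 : ℝ) * ((nbrs l).map φ).sum ≤ φ l - 1 := by
    unfold Lap at hsup; linarith
  have hS : {w : V | w ∈ B ∧ adj l w}.indicator (fun w => ENNReal.ofReal ((1/4:ℝ)^(n+1) * φ w))
      ≤ fun w => if w ∈ nbrs l then ENNReal.ofReal ((1/4:ℝ)^(n+1) * φ w) else 0 := by
    intro w
    dsimp only
    by_cases hw : w ∈ {w : V | w ∈ B ∧ adj l w}
    · rw [Set.indicator_of_mem hw, if_pos (adj_mem_nbrs hw.2)]
    · rw [Set.indicator_of_notMem hw]
      exact zero_le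
  calc ∑' w : {w : V // w ∈ B ∧ adj l w}, ENNReal.ofReal ((1/4:ℝ)^(n+1) * φ w.1)
      = ∑' w : V, {w : V | w ∈ B ∧ adj l w}.indicator
          (fun w => ENNReal.ofReal ((1/4:ℝ)^(n+1) * φ w)) w :=
        tsum_subtype {w : V | w ∈ B ∧ adj l w} (fun w => ENNReal.ofReal ((1/4:ℝ)^(n+1) * φ w))
    _ ≤ ∑' w : V, if w ∈ nbrs l then ENNReal.ofReal ((1/4:ℝ)^(n+1) * φ w) else 0 :=
        ENNReal.tsum_le_tsum hS
    _ = ∑ w ∈ (nbrs l).toFinset, if w ∈ nbrs l then ENNReal.ofReal ((1/4:ℝ)^(n+1) * φ w) else 0 := by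
        apply tsum_eq_sum
        intro w hw
        rw [if_neg (fun hc => hw (List.mem_toFinset.mpr hc))]
    _ = ∑ w ∈ (nbrs l).toFinset, ENNReal.ofReal ((1/4:ℝ)^(n+1) * φ w) := by
        apply Finset.sum_congr rfl
        intro w hw
        rw [if_pos (List.mem_toFinset.mp hw)]
    _ = ENNReal.ofReal (∑ w ∈ (nbrs l).toFinset, (1/4:ℝ)^(n+1) * φ w) := by
        rw [ENNReal.ofReal_sum_of_nonneg]
        intro w _
        exact mul_nonneg (by positivity) (hφ0 w)
    _ ≤ ENNReal.ofReal ((1/4:ℝ)^n * (φ l - 1)) := by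
        apply ENNReal.ofReal_le_ofReal
        rw [← Finset.mul_sum, List.sum_toFinset _ (nbrs_nodup l)]
        have : ((nbrs l).map φ).sum ≥ 0 := nbrs_sum_nonneg φ hφ0 l
        calc (1/4:ℝ)^(n+1) * ((nbrs l).map φ).sum
            = (1/4:ℝ)^n * ((1/4:ℝ) * ((nbrs l).map φ).sum) := by ring
          _ ≤ (1/4:ℝ)^n * (φ l - 1) := by
              apply mul_le_mul_of_nonneg_left hsum (by positivity)

lemma TE_step (B : Set V) (z : V) (φ : V → ℝ) (hφ0 : ∀ w, 0 ≤ φ w)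
    (hsup : ∀ x ∈ B, Lap φ x ≤ -1) (n : ℕ) :
    TE B z φ (n+2) + SE B z (n+1) ≤ TE B z φ (n+1) := by
  have hTE2 : TE B z φ (n+2)
      = ∑' ω : Wk B z (n+1), ∑' w : {w : V // w ∈ B ∧ adj (lstV ω.1) w},
          ENNReal.ofReal ((1/4:ℝ)^(n+1) * φ w.1) := by
    rw [TE, ← Equiv.tsum_eq (extE B z n)]
    rw [ENNReal.tsum_sigma']
    apply tsum_congr; intro ω
    apply tsum_congr; intro w
    congr 1
    have hlen : (ω.1 ++ [w.1]).length = n + 2 := by simp [ω.2.1]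
    rw [show (extE B z n) ⟨ω, w⟩ = (⟨ω.1 ++ [w.1], ω.2.concat w.2.1 w.2.2⟩ : Wk B z (n+2)) from rfl]
    simp only [pweight_of_len hlen, lstV_concat]
    norm_num
  have hb : ∀ ω : Wk B z (n+1),
      (∑' w : {w : V // w ∈ B ∧ adj (lstV ω.1) w}, ENNReal.ofReal ((1/4:ℝ)^(n+1) * φ w.1))
        + ENNReal.ofReal (pweight ω.1)
      ≤ ENNReal.ofReal (pweight ω.1 * φ (lstV ω.1)) := by
    intro ω
    have hlB : lstV ω.1 ∈ B := ω.2.last_mem_B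
    have hsl := hsup _ hlB
    have h1 : 1 ≤ φ (lstV ω.1) := phi_ge_one φ hφ0 hsl
    have hpw : pweight ω.1 = (1/4:ℝ)^n := by
      rw [pweight_of_len ω.2.1]; norm_num
    calc (∑' w : {w : V // w ∈ B ∧ adj (lstV ω.1) w}, ENNReal.ofReal ((1/4:ℝ)^(n+1) * φ w.1))
          + ENNReal.ofReal (pweight ω.1)
        ≤ ENNReal.ofReal ((1/4:ℝ)^n * (φ (lstV ω.1) - 1)) + ENNReal.ofReal ((1/4:ℝ)^n) := by
          rw [hpw]
          exact add_le_add_left (inner_step B φ hφ0 _ hsl n) _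
      _ = ENNReal.ofReal ((1/4:ℝ)^n * (φ (lstV ω.1) - 1) + (1/4:ℝ)^n) := by
          rw [← ENNReal.ofReal_add (by nlinarith [pow_nonneg (by norm_num : (0:ℝ) ≤ 1/4) n, h1]) (by positivity : (0:ℝ) ≤ (1/4:ℝ)^n)]
      _ = ENNReal.ofReal (pweight ω.1 * φ (lstV ω.1)) := by
          rw [hpw]; congr 1; ring
  calc TE B z φ (n+2) + SE B z (n+1)
      = ∑' ω : Wk B z (n+1),
          ((∑' w : {w : V // w ∈ B ∧ adj (lstV ω.1) w}, ENNReal.ofReal ((1/4:ℝ)^(n+1) * φ w.1))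
            + ENNReal.ofReal (pweight ω.1)) := by
        rw [hTE2, SE, ENNReal.tsum_add]
    _ ≤ ∑' ω : Wk B z (n+1), ENNReal.ofReal (pweight ω.1 * φ (lstV ω.1)) :=
        ENNReal.tsum_le_tsum hb
    _ = TE B z φ (n+1) := rfl

lemma TE_one (B : Set V) (z : V) (φ : V → ℝ) (hz : z ∈ B) :
    TE B z φ 1 = ENNReal.ofReal (φ z) := by
  have he : WkP B z 1 [z] := by
    refine ⟨rfl, ⟨by simp, List.isChain_singleton z⟩, rfl, ?_⟩
    intro x hx
    simp only [List.mem_singleton] at hx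
    subst hx; exact hz
  have huniq : ∀ ω : Wk B z 1, ω = ⟨[z], he⟩ := by
    rintro ⟨ω, hlen, hw, hs, hm⟩
    rcases List.length_eq_one_iff.mp hlen with ⟨a, rfl⟩
    have : a = z := by
      have : ([a] : List V).head? = some z := hs
      simpa using this
    subst this; rfl
  rw [TE, tsum_eq_single (⟨[z], he⟩ : Wk B z 1) (fun b hb => absurd (huniq b) hb)]
  simp [pweight, lstV]

lemma SE_partial_bound (B : Set V) (z : V) (φ : V → ℝ) (hz : z ∈ B)
    (hφ0 : ∀ w, 0 ≤ φ w) (hsup : ∀ x ∈ B, Lap φ x ≤ -1) (K : ℕ) :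
    (∑ j ∈ Finset.range K, SE B z (j+1)) + TE B z φ (K+1) ≤ ENNReal.ofReal (φ z) := by
  induction K with
  | zero => simp [TE_one B z φ hz]
  | succ K ih =>
      rw [Finset.sum_range_succ]
      calc ∑ j ∈ Finset.range K, SE B z (j+1) + SE B z (K+1) + TE B z φ (K+2)
          = ∑ j ∈ Finset.range K, SE B z (j+1) + (TE B z φ (K+2) + SE B z (K+1)) := by ring
        _ ≤ ∑ j ∈ Finset.range K, SE B z (j+1) + TE B z φ (K+1) :=
            add_le_add_right (TE_step B z φ hφ0 hsup K) _
        _ ≤ ENNReal.ofReal (φ z) := ih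

lemma SE_tsum_bound (B : Set V) (z : V) (φ : V → ℝ) (hz : z ∈ B)
    (hφ0 : ∀ w, 0 ≤ φ w) (hsup : ∀ x ∈ B, Lap φ x ≤ -1) :
    ∑' j : ℕ, SE B z (j+1) ≤ ENNReal.ofReal (φ z) := by
  apply Summable.tsum_le_of_sum_range_le ENNReal.summable
  intro K
  exact le_trans le_self_add (SE_partial_bound B z φ hz hφ0 hsup K)

lemma stayProb_toReal (B : Set V) (z : V) (n : ℕ) :
    stayProb B z n = (SE B z n).toReal := by
  rw [SE, ENNReal.tsum_toReal_eq (fun a => ENNReal.ofReal_ne_top), stayProb_eq]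
  apply tsum_congr
  intro ω
  rw [ENNReal.toReal_ofReal (pweight_nonneg ω.1)]

lemma expTime_le_of_superharmonic {B : Set V} {z : V} (φ : V → ℝ)
    (hz : z ∈ B) (hφ0 : ∀ w, 0 ≤ φ w) (hsup : ∀ x ∈ B, Lap φ x ≤ -1) :
    expTime B z ≤ φ z := by
  have htot := SE_tsum_bound B z φ hz hφ0 hsup
  have hfin : ∀ j : ℕ, SE B z (j+1) ≠ ⊤ := fun j =>
    ne_top_of_le_ne_top ENNReal.ofReal_ne_top (le_trans (ENNReal.le_tsum j) htot)
  have h1 : expTime B z = (∑' j : ℕ, SE B z (j+1)).toReal := by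
    rw [ENNReal.tsum_toReal_eq hfin, expTime]
    apply tsum_congr
    intro k
    exact stayProb_toReal B z (k+1)
  rw [h1]
  calc (∑' j : ℕ, SE B z (j+1)).toReal
      ≤ (ENNReal.ofReal (φ z)).toReal := ENNReal.toReal_mono ENNReal.ofReal_ne_top htot
    _ = φ z := ENNReal.toReal_ofReal (hφ0 z)

lemma expTime_of_not_mem {B : Set V} {z : V} (hz : z ∉ B) : expTime B z = 0 := by
  have h : ∀ k : ℕ, stayProb B z k = 0 := by
    intro k
    have : IsEmpty (Wk B z k) := ⟨fun ω => hz ω.2.start_mem⟩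
    rw [stayProb_eq]
    exact tsum_empty
  simp [expTime, h]



/-! Part B: the explicit supersolution. -/

noncomputable def Gf (x b : ℝ) : ℝ := (2*b*x^2 - b^3)/x^3

noncomputable def phi1 (R : ℝ) (w : V) : ℝ :=
  40*R^2 - min ((w.1:ℝ)^2 + (w.2:ℝ)^2) ((4*R+1)^2)

noncomputable def qq (w : V) : ℝ := min |(w.2:ℝ)| ((w.1:ℝ)/2)

noncomputable def psi (w : V) : ℝ :=
  if 1 ≤ w.1 then (2 * qq w * (w.1:ℝ)^2 - (qq w)^3) / (w.1:ℝ)^3 else 1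

noncomputable def phi2 (R : ℝ) (w : V) : ℝ :=
  66*R*|(w.2:ℝ)| - 2 * min ((w.2:ℝ)^2) ((4*R+1)^2) + 100*R^2 * min (1/2) (psi w)

noncomputable def phiR (R : ℝ) (w : V) : ℝ := min (phi1 R w) (phi2 R w)

lemma toC_re (z : V) : (toC z).re = (z.1 : ℝ) := by simp [toC]
lemma toC_im (z : V) : (toC z).im = (z.2 : ℝ) := by simp [toC]

lemma nrm_sq (z : V) : nrm z ^ 2 = (z.1:ℝ)^2 + (z.2:ℝ)^2 := by
  rw [nrm, Complex.sq_norm, Complex.normSq_apply, toC_re, toC_im]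
  ring

lemma nrm_nonneg (z : V) : 0 ≤ nrm z := norm_nonneg _

/-- the cubic barrier inequality -/
lemma cubic_claim (x b : ℝ) (hx : 4 ≤ x) (hb : 1 ≤ b) :
    Gf (x+1) b + Gf (x-1) b + Gf x (b+1) + Gf x (b-1) ≤ 4 * Gf x b := by
  have hx0 : (0:ℝ) < x := by linarith
  have hxm : (0:ℝ) < x - 1 := by linarith
  have hxp : (0:ℝ) < x + 1 := by linarith
  have hb0 : (0:ℝ) < b := by linarith
  have hy : Gf x (b+1) + Gf x (b-1) = 2*(Gf x b) - 6*b/x^3 := by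
    unfold Gf; field_simp; ring
  have hxpart : Gf (x+1) b + Gf (x-1) b
      = 2*b/(x+1) + 2*b/(x-1) - (b^3/(x+1)^3 + b^3/(x-1)^3) := by
    unfold Gf; field_simp; ring
  have hG2 : 2*(Gf x b) = 4*b/x - 2*b^3/x^3 := by
    unfold Gf; field_simp; ring
  have hx23 : (0:ℝ) ≤ x^2 - 3 := by nlinarith
  have e1 : 2*b/(x+1) + 2*b/(x-1) ≤ 4*b/x + 6*b/x^3 := by
    rw [div_add_div _ _ hxp.ne' hxm.ne', div_add_div _ _ hx0.ne' (pow_pos hx0 3).ne',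
      div_le_div_iff₀ (by positivity) (by positivity)]
    nlinarith [mul_nonneg hb0.le hx23, mul_nonneg (mul_nonneg hb0.le hx23) (sq_nonneg x)]
  have e2 : 2*b^3/x^3 ≤ b^3/(x+1)^3 + b^3/(x-1)^3 := by
    rw [div_add_div _ _ (pow_pos hxp 3).ne' (pow_pos hxm 3).ne',
      div_le_div_iff₀ (by positivity) (by positivity)]
    have h12 : (0:ℝ) ≤ 12*x^4 - 6*x^2 + 2 := by nlinarith [sq_nonneg (x^2 - 1/4), sq_nonneg x]
    nlinarith [mul_nonneg (pow_nonneg hb0.le 3) h12]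
  linarith [hy, hxpart, hG2, e1, e2]

lemma part1_nonneg {R : ℝ} (hR : 1 ≤ R) (y : ℝ) :
    0 ≤ 66*R*|y| - 2*min (y^2) ((4*R+1)^2) := by
  rcases le_total (y^2) ((4*R+1)^2) with h | h
  · rw [min_eq_left h]
    have h2 : |y| ≤ 4*R+1 := by nlinarith [sq_abs y, abs_nonneg y]
    nlinarith [sq_abs y, abs_nonneg y]
  · rw [min_eq_right h]
    have h2 : 4*R+1 ≤ |y| := by nlinarith [sq_abs y, abs_nonneg y]
    nlinarith [abs_nonneg y]

lemma psi_nonneg (w : V) : 0 ≤ psi w := by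
  rw [psi]
  split_ifs with h
  · have hX : (1:ℝ) ≤ (w.1:ℝ) := by exact_mod_cast h
    have hq0 : 0 ≤ qq w := le_min (abs_nonneg _) (by linarith)
    have hq2 : qq w ≤ (w.1:ℝ)/2 := min_le_right _ _
    apply div_nonneg _ (by positivity)
    have hq2' : qq w ^ 2 ≤ (w.1:ℝ)^2/4 := by nlinarith
    nlinarith [mul_nonneg hq0 (by nlinarith : (0:ℝ) ≤ 2*((w.1:ℝ))^2 - qq w ^2)]
  · norm_num

lemma phi1_le {R : ℝ} (w : V) : phi1 R w ≤ 40*R^2 := by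
  rw [phi1]
  have : (0:ℝ) ≤ min ((w.1:ℝ)^2 + (w.2:ℝ)^2) ((4*R+1)^2) := le_min (by positivity) (by positivity)
  linarith

lemma phiR_nonneg {R : ℝ} (hR : 1 ≤ R) (w : V) : 0 ≤ phiR R w := by
  rw [phiR]
  apply le_min
  · rw [phi1]
    have : min ((w.1:ℝ)^2 + (w.2:ℝ)^2) ((4*R+1)^2) ≤ (4*R+1)^2 := min_le_right _ _
    nlinarith
  · rw [phi2]
    have h1 := part1_nonneg hR (w.2 : ℝ)
    have h2 : (0:ℝ) ≤ min (1/2) (psi w) := le_min (by norm_num) (psi_nonneg w)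
    nlinarith

lemma Lap_min_le_left {f g : V → ℝ} {x : V} (h : f x ≤ g x) :
    Lap (fun w => min (f w) (g w)) x ≤ Lap f x := by
  unfold Lap
  have hm : ((nbrs x).map (fun w => min (f w) (g w))).sum ≤ ((nbrs x).map f).sum := by
    simp only [nbrs, List.map_cons, List.map_nil, List.sum_cons, List.sum_nil]
    have a1 := min_le_left (f (x.1+1, x.2)) (g (x.1+1, x.2))
    have a2 := min_le_left (f (x.1-1, x.2)) (g (x.1-1, x.2))
    have a3 := min_le_left (f (x.1, x.2+1)) (g (x.1, x.2+1))
    have a4 := min_le_left (f (x.1, x.2-1)) (g (x.1, x.2-1))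
    linarith
  have hb : (fun w => min (f w) (g w)) x = f x := min_eq_left h
  rw [hb]
  linarith

lemma Lap_min_le_right {f g : V → ℝ} {x : V} (h : g x ≤ f x) :
    Lap (fun w => min (f w) (g w)) x ≤ Lap g x := by
  unfold Lap
  have hm : ((nbrs x).map (fun w => min (f w) (g w))).sum ≤ ((nbrs x).map g).sum := by
    simp only [nbrs, List.map_cons, List.map_nil, List.sum_cons, List.sum_nil]
    have a1 := min_le_right (f (x.1+1, x.2)) (g (x.1+1, x.2))
    have a2 := min_le_right (f (x.1-1, x.2)) (g (x.1-1, x.2))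
    have a3 := min_le_right (f (x.1, x.2+1)) (g (x.1, x.2+1))
    have a4 := min_le_right (f (x.1, x.2-1)) (g (x.1, x.2-1))
    linarith
  have hb : (fun w => min (f w) (g w)) x = g x := min_eq_right h
  rw [hb]
  linarith

lemma Lap_phi1 {R : ℝ} (hR : 1 ≤ R) {z : V}
    (hz : (z.1:ℝ)^2 + (z.2:ℝ)^2 < 16*R^2) : Lap (phi1 R) z = -1 := by
  set X := (z.1 : ℝ)
  set Y := (z.2 : ℝ)
  have key : ∀ a b : ℤ, (a:ℝ)^2 + (b:ℝ)^2 ≤ (4*R+1)^2 →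
      phi1 R (a, b) = 40*R^2 - ((a:ℝ)^2+(b:ℝ)^2) := by
    intro a b h
    rw [phi1, min_eq_left h]
  have hc : phi1 R z = 40*R^2 - (X^2+Y^2) := by
    have := key z.1 z.2 (by nlinarith)
    simpa using this
  have h1 : phi1 R (z.1+1, z.2) = 40*R^2 - (((z.1+1:ℤ):ℝ)^2+Y^2) := by
    apply key; push_cast
    nlinarith [sq_nonneg (X - 4*R), sq_nonneg (X + 4*R)]
  have h2 : phi1 R (z.1-1, z.2) = 40*R^2 - (((z.1-1:ℤ):ℝ)^2+Y^2) := by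
    apply key; push_cast
    nlinarith [sq_nonneg (X - 4*R), sq_nonneg (X + 4*R)]
  have h3 : phi1 R (z.1, z.2+1) = 40*R^2 - (X^2+((z.2+1:ℤ):ℝ)^2) := by
    apply key; push_cast
    nlinarith [sq_nonneg (Y - 4*R), sq_nonneg (Y + 4*R)]
  have h4 : phi1 R (z.1, z.2-1) = 40*R^2 - (X^2+((z.2-1:ℤ):ℝ)^2) := by
    apply key; push_cast
    nlinarith [sq_nonneg (Y - 4*R), sq_nonneg (Y + 4*R)]
  unfold Lap nbrs
  simp only [List.map_cons, List.map_nil, List.sum_cons, List.sum_nil]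
  rw [h1, h2, h3, h4, hc]
  push_cast
  ring


lemma psi_eval {w : V} (h1 : 1 ≤ w.1) (h2 : |(w.2:ℝ)| ≤ (w.1:ℝ)/2) :
    psi w = Gf (w.1:ℝ) |(w.2:ℝ)| := by
  rw [psi, if_pos h1, Gf, qq, min_eq_left h2]

lemma phi2_le {R : ℝ} (w : V) (h1 : 1 ≤ w.1) (h2 : |(w.2:ℝ)| ≤ (w.1:ℝ)/2)
    (h3 : (w.2:ℝ)^2 ≤ (4*R+1)^2) :
    phi2 R w ≤ 66*R*|(w.2:ℝ)| - 2*(w.2:ℝ)^2 + 100*R^2 * Gf (w.1:ℝ) |(w.2:ℝ)| := by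
  rw [phi2, min_eq_left h3, psi_eval h1 h2]
  have h := mul_le_mul_of_nonneg_left (min_le_right (1/2 : ℝ) (Gf (w.1:ℝ) |(w.2:ℝ)|))
    (show (0:ℝ) ≤ 100*R^2 by positivity)
  linarith

lemma phi2_center {R : ℝ} {w : V} (h1 : 1 ≤ w.1) (h2 : |(w.2:ℝ)| ≤ (w.1:ℝ)/2)
    (h3 : (w.2:ℝ)^2 ≤ (4*R+1)^2) (h4 : psi w ≤ 2/5) :
    phi2 R w = 66*R*|(w.2:ℝ)| - 2*(w.2:ℝ)^2 + 100*R^2 * Gf (w.1:ℝ) |(w.2:ℝ)| := by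
  rw [phi2, min_eq_left h3, min_eq_right (h4.trans (by norm_num)), psi_eval h1 h2]

lemma sq_pm_le {y M : ℝ} (h : |y| ≤ M) : (y+1)^2 ≤ (M+1)^2 ∧ (y-1)^2 ≤ (M+1)^2 := by
  obtain ⟨h1, h2⟩ := abs_le.mp h
  constructor <;> nlinarith

lemma Lap_phi2_le {R : ℝ} (hR : 1 ≤ R) {z : V}
    (hball : (z.1:ℝ)^2 + (z.2:ℝ)^2 < 16*R^2) (hnz : z ∉ Zplus)
    (hmin : phi2 R z ≤ phi1 R z) : Lap (phi2 R) z ≤ -1 := by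
  have hR2 : (0:ℝ) < R^2 := by positivity
  have hm25 : min (1/2 : ℝ) (psi z) ≤ 2/5 := by
    have h0 : phi2 R z ≤ 40*R^2 := le_trans hmin (phi1_le z)
    have hp1 := part1_nonneg hR (z.2:ℝ)
    rw [phi2] at h0
    nlinarith
  have hpsile : psi z ≤ 2/5 := by
    rcases lt_or_ge (psi z) (1/2 : ℝ) with h | h
    · rwa [min_eq_right h.le] at hm25
    · rw [min_eq_left h] at hm25; norm_num at hm25
  have hx1 : 1 ≤ z.1 := by
    by_contra h
    rw [psi, if_neg h] at hpsile; norm_num at hpsile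
  have hX1 : (1:ℝ) ≤ (z.1:ℝ) := by exact_mod_cast hx1
  have hX0 : (0:ℝ) < (z.1:ℝ) := by linarith
  have hy0 : z.2 ≠ 0 := fun h => hnz ⟨by omega, h⟩
  have hb1 : (1:ℝ) ≤ |(z.2:ℝ)| := by
    have h1 : (1:ℤ) ≤ |z.2| := Int.one_le_abs hy0
    rw [← Int.cast_abs]
    exact_mod_cast h1
  have hb0 : (0:ℝ) ≤ |(z.2:ℝ)| := abs_nonneg _
  have hYX : |(z.2:ℝ)| ≤ (z.1:ℝ)/2 := by
    rcases le_total |(z.2:ℝ)| ((z.1:ℝ)/2) with h | h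
    · exact h
    · exfalso
      rw [psi, if_pos hx1, qq, min_eq_right h, div_le_iff₀ (by positivity)] at hpsile
      nlinarith
  have hpsiG : psi z = Gf (z.1:ℝ) |(z.2:ℝ)| := psi_eval hx1 hYX
  have hG25 : Gf (z.1:ℝ) |(z.2:ℝ)| ≤ 2/5 := hpsiG ▸ hpsile
  have hb835 : |(z.2:ℝ)| ≤ (8/35)*(z.1:ℝ) := by
    rw [Gf, div_le_iff₀ (by positivity)] at hG25
    have h2 : (|(z.2:ℝ)|)^2 ≤ (z.1:ℝ)^2/4 := by nlinarith
    have h3 : (|(z.2:ℝ)|)^3 ≤ (|(z.2:ℝ)|) * ((z.1:ℝ)^2/4) := by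
      calc (|(z.2:ℝ)|)^3 = (|(z.2:ℝ)|) * (|(z.2:ℝ)|)^2 := by ring
        _ ≤ (|(z.2:ℝ)|) * ((z.1:ℝ)^2/4) := mul_le_mul_of_nonneg_left h2 hb0
    nlinarith [mul_pos hX0 hX0]
  have hX4 : (4:ℝ) ≤ (z.1:ℝ) := by linarith
  have hz5 : 5 ≤ z.1 := by
    have h4 : (4:ℝ) < (z.1:ℝ) := by linarith
    have : (4:ℤ) < z.1 := by exact_mod_cast h4
    omega
  have hb4R : |(z.2:ℝ)| ≤ 4*R := by nlinarith [sq_abs (z.2:ℝ)]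
  have hY2M : (z.2:ℝ)^2 ≤ (4*R+1)^2 := by nlinarith
  -- neighbor bounds
  have hc1 : ((z.1+1 : ℤ):ℝ) = (z.1:ℝ) + 1 := by push_cast; ring
  have hc2 : ((z.1-1 : ℤ):ℝ) = (z.1:ℝ) - 1 := by push_cast; ring
  have hc3 : ((z.2+1 : ℤ):ℝ) = (z.2:ℝ) + 1 := by push_cast; ring
  have hc4 : ((z.2-1 : ℤ):ℝ) = (z.2:ℝ) - 1 := by push_cast; ring
  have hnb1 : phi2 R (z.1+1, z.2)
      ≤ 66*R*|(z.2:ℝ)| - 2*(z.2:ℝ)^2 + 100*R^2 * Gf ((z.1:ℝ)+1) |(z.2:ℝ)| := by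
    have h : phi2 R (z.1+1, z.2)
        ≤ 66*R*|(z.2:ℝ)| - 2*(z.2:ℝ)^2 + 100*R^2 * Gf ((z.1+1 : ℤ):ℝ) |(z.2:ℝ)| :=
      phi2_le (R := R) (z.1+1, z.2) (by omega)
        (show |(z.2:ℝ)| ≤ ((z.1+1 : ℤ):ℝ)/2 by rw [hc1]; linarith)
        (show (z.2:ℝ)^2 ≤ (4*R+1)^2 from hY2M)
    rwa [hc1] at h
  have hnb2 : phi2 R (z.1-1, z.2)
      ≤ 66*R*|(z.2:ℝ)| - 2*(z.2:ℝ)^2 + 100*R^2 * Gf ((z.1:ℝ)-1) |(z.2:ℝ)| := by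
    have h : phi2 R (z.1-1, z.2)
        ≤ 66*R*|(z.2:ℝ)| - 2*(z.2:ℝ)^2 + 100*R^2 * Gf ((z.1-1 : ℤ):ℝ) |(z.2:ℝ)| :=
      phi2_le (R := R) (z.1-1, z.2) (by omega)
        (show |(z.2:ℝ)| ≤ ((z.1-1 : ℤ):ℝ)/2 by rw [hc2]; linarith)
        (show (z.2:ℝ)^2 ≤ (4*R+1)^2 from hY2M)
    rwa [hc2] at h
  have habs_p : |(z.2:ℝ)+1| ≤ |(z.2:ℝ)| + 1 := by
    calc |(z.2:ℝ)+1| ≤ |(z.2:ℝ)| + |(1:ℝ)| := abs_add_le _ 1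
      _ = |(z.2:ℝ)| + 1 := by norm_num
  have habs_m : |(z.2:ℝ)-1| ≤ |(z.2:ℝ)| + 1 := by
    calc |(z.2:ℝ)-1| ≤ |(z.2:ℝ)| + |(1:ℝ)| := abs_sub _ 1
      _ = |(z.2:ℝ)| + 1 := by norm_num
  have hnb3 : phi2 R (z.1, z.2+1)
      ≤ 66*R*|(z.2:ℝ)+1| - 2*((z.2:ℝ)+1)^2 + 100*R^2 * Gf (z.1:ℝ) |(z.2:ℝ)+1| := by
    have h : phi2 R (z.1, z.2+1)
        ≤ 66*R*|((z.2+1 : ℤ):ℝ)| - 2*((z.2+1 : ℤ):ℝ)^2 + 100*R^2 * Gf (z.1:ℝ) |((z.2+1 : ℤ):ℝ)| :=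
      phi2_le (R := R) (z.1, z.2+1) hx1
        (show |((z.2+1 : ℤ):ℝ)| ≤ (z.1:ℝ)/2 by rw [hc3]; linarith)
        (show ((z.2+1 : ℤ):ℝ)^2 ≤ (4*R+1)^2 by
          rw [hc3]; exact (sq_pm_le hb4R).1)
    rwa [hc3] at h
  have hnb4 : phi2 R (z.1, z.2-1)
      ≤ 66*R*|(z.2:ℝ)-1| - 2*((z.2:ℝ)-1)^2 + 100*R^2 * Gf (z.1:ℝ) |(z.2:ℝ)-1| := by
    have h : phi2 R (z.1, z.2-1)
        ≤ 66*R*|((z.2-1 : ℤ):ℝ)| - 2*((z.2-1 : ℤ):ℝ)^2 + 100*R^2 * Gf (z.1:ℝ) |((z.2-1 : ℤ):ℝ)| :=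
      phi2_le (R := R) (z.1, z.2-1) hx1
        (show |((z.2-1 : ℤ):ℝ)| ≤ (z.1:ℝ)/2 by rw [hc4]; linarith)
        (show ((z.2-1 : ℤ):ℝ)^2 ≤ (4*R+1)^2 by
          rw [hc4]; exact (sq_pm_le hb4R).2)
    rwa [hc4] at h
  -- abs values at y-neighbors
  have hcases : ((1:ℝ) ≤ (z.2:ℝ)) ∨ ((z.2:ℝ) ≤ -1) := by
    rcases lt_or_gt_of_ne hy0 with h | h
    · right
      have h' : z.2 ≤ -1 := by omega
      exact_mod_cast h'
    · left
      have h' : 1 ≤ z.2 := by omega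
      exact_mod_cast h'
  have habs2 : (|(z.2:ℝ)+1| = |(z.2:ℝ)|+1 ∧ |(z.2:ℝ)-1| = |(z.2:ℝ)|-1)
      ∨ (|(z.2:ℝ)+1| = |(z.2:ℝ)|-1 ∧ |(z.2:ℝ)-1| = |(z.2:ℝ)|+1) := by
    rcases hcases with h | h
    · left
      constructor
      · rw [abs_of_nonneg (by linarith : (0:ℝ) ≤ (z.2:ℝ)+1),
          abs_of_nonneg (by linarith : (0:ℝ) ≤ (z.2:ℝ))]
      · rw [abs_of_nonneg (by linarith : (0:ℝ) ≤ (z.2:ℝ)-1),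
          abs_of_nonneg (by linarith : (0:ℝ) ≤ (z.2:ℝ))]
    · right
      constructor
      · rw [abs_of_nonpos (by linarith : (z.2:ℝ)+1 ≤ 0),
          abs_of_nonpos (by linarith : (z.2:ℝ) ≤ 0)]
        ring
      · rw [abs_of_nonpos (by linarith : (z.2:ℝ)-1 ≤ 0),
          abs_of_nonpos (by linarith : (z.2:ℝ) ≤ 0)]
        ring
  have hcen : phi2 R z = 66*R*|(z.2:ℝ)| - 2*(z.2:ℝ)^2 + 100*R^2 * Gf (z.1:ℝ) |(z.2:ℝ)| :=
    phi2_center (R := R) (w := z) hx1 hYX hY2M hpsile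
  have cubic := cubic_claim (z.1:ℝ) |(z.2:ℝ)| hX4 hb1
  have cubic' := mul_le_mul_of_nonneg_left cubic (show (0:ℝ) ≤ 25*R^2 by positivity)
  unfold Lap nbrs
  simp only [List.map_cons, List.map_nil, List.sum_cons, List.sum_nil, add_zero]
  rcases habs2 with ⟨e1, e2⟩ | ⟨e1, e2⟩
  · rw [e1] at hnb3; rw [e2] at hnb4
    linarith [hnb1, hnb2, hnb3, hnb4, hcen, cubic']
  · rw [e1] at hnb3; rw [e2] at hnb4
    linarith [hnb1, hnb2, hnb3, hnb4, hcen, cubic']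

lemma Lap_phiR {R : ℝ} (hR : 1 ≤ R) {z : V} (hz : z ∈ contSet (4*R)) :
    Lap (phiR R) z ≤ -1 := by
  obtain ⟨hb, hnz⟩ := hz
  have hball : (z.1:ℝ)^2+(z.2:ℝ)^2 < 16*R^2 := by
    have h1 : nrm z < 4*R := hb
    have h2 := nrm_nonneg z
    nlinarith [nrm_sq z]
  have hrw : phiR R = fun w => min (phi1 R w) (phi2 R w) := rfl
  rcases le_total (phi1 R z) (phi2 R z) with h | h
  · rw [hrw]
    calc Lap (fun w => min (phi1 R w) (phi2 R w)) z ≤ Lap (phi1 R) z := Lap_min_le_left h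
      _ = -1 := Lap_phi1 hR hball
  · rw [hrw]
    exact le_trans (Lap_min_le_right h) (Lap_phi2_le hR hball hnz h)


lemma toC_ne_zero {z : V} (hz : z ≠ ((0,0) : V)) : toC z ≠ 0 := by
  intro h
  apply hz
  have hre := congrArg Complex.re h
  have him := congrArg Complex.im h
  rw [toC_re] at hre
  rw [toC_im] at him
  simp only [Complex.zero_re, Complex.zero_im] at hre him
  have h1 : z.1 = 0 := by exact_mod_cast hre
  have h2 : z.2 = 0 := by exact_mod_cast him
  exact Prod.ext h1 h2

lemma theta_bounds (z : V) : 0 ≤ theta z ∧ theta z < 2*Real.pi := by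
  have hpi := Real.pi_pos
  have h1 := Complex.arg_le_pi (toC z)
  have h2 := Complex.neg_pi_lt_arg (toC z)
  rw [theta]
  split_ifs with h
  · exact ⟨h, by nlinarith⟩
  · push_neg at h
    constructor <;> nlinarith

lemma sin_theta_half_nonneg (z : V) : 0 ≤ Real.sin (theta z / 2) := by
  obtain ⟨h0, h2⟩ := theta_bounds z
  have hpi := Real.pi_pos
  apply Real.sin_nonneg_of_nonneg_of_le_pi <;> nlinarith

lemma cos_theta (z : V) (hz : toC z ≠ 0) : Real.cos (theta z) = (z.1:ℝ) / nrm z := by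
  rw [theta]
  split_ifs with h
  · rw [Complex.cos_arg hz, toC_re, nrm]
  · rw [Real.cos_add_two_pi, Complex.cos_arg hz, toC_re, nrm]

lemma sin_theta_half_sq (z : V) (hz : toC z ≠ 0) :
    Real.sin (theta z / 2) ^ 2 = (1 - (z.1:ℝ)/nrm z)/2 := by
  obtain ⟨h0, h2⟩ := theta_bounds z
  rw [Real.sin_half_eq_sqrt h0 (by linarith)]
  rw [Real.sq_sqrt (by nlinarith [Real.cos_le_one (theta z)])]
  rw [cos_theta z hz]

lemma phiR_bound {R : ℝ} (hR : 1 ≤ R) (z : V) (hz : z ∉ Zplus) (hn : nrm z ≤ 4*R) :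
    phiR R z ≤ 1000 * Real.sin (theta z / 2) * R^2 := by
  have hs0 : 0 ≤ Real.sin (theta z / 2) := sin_theta_half_nonneg z
  rcases le_or_gt (1/8 : ℝ) (Real.sin (theta z / 2)) with hs | hs
  · have h1 : phiR R z ≤ phi1 R z := min_le_left _ _
    have h2 := phi1_le (R := R) z
    nlinarith
  · have hz00 : z ≠ ((0,0) : V) := by
      intro h; exact hz (by rw [h]; exact ⟨le_refl 0, rfl⟩)
    have htc := toC_ne_zero hz00
    have hr0 : 0 < nrm z := by
      rw [nrm]; exact norm_pos_iff.mpr htc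
    have hs2 : (Real.sin (theta z / 2))^2 = (1 - (z.1:ℝ)/nrm z)/2 := sin_theta_half_sq z htc
    have hrX : nrm z - (z.1:ℝ) = 2*(nrm z)*(Real.sin (theta z / 2))^2 := by
      field_simp at hs2
      linarith
    have hr2 : (nrm z)^2 = (z.1:ℝ)^2 + (z.2:ℝ)^2 := nrm_sq z
    have hs164 : (Real.sin (theta z / 2))^2 < 1/64 := by nlinarith
    have hXr31 : (31/32)*(nrm z) ≤ (z.1:ℝ) := by nlinarith
    have hX0 : (0:ℝ) < (z.1:ℝ) := by linarith
    have hY2 : (z.2:ℝ)^2 ≤ 4*(nrm z)^2*(Real.sin (theta z / 2))^2 := by nlinarith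
    have hbY : |(z.2:ℝ)| ≤ 2*(nrm z)*(Real.sin (theta z / 2)) := by
      nlinarith [sq_abs (z.2:ℝ), abs_nonneg (z.2:ℝ),
        mul_nonneg (mul_nonneg (by norm_num : (0:ℝ) ≤ 2) hr0.le) hs0]
    have hz1 : 1 ≤ z.1 := by
      have h1 : (0:ℤ) < z.1 := by exact_mod_cast hX0
      omega
    have hq0 : 0 ≤ qq z := le_min (abs_nonneg _) (by linarith)
    have hqY : qq z ≤ |(z.2:ℝ)| := min_le_left _ _
    have hpsi_le : psi z ≤ 2*|(z.2:ℝ)|/(z.1:ℝ) := by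
      rw [psi, if_pos hz1]
      rw [div_le_div_iff₀ (by positivity) (by positivity)]
      nlinarith [pow_nonneg hq0 3,
        mul_le_mul_of_nonneg_right hqY (le_of_lt (pow_pos hX0 2)), mul_pos hX0 hX0]
    have h2YX : 2*|(z.2:ℝ)|/(z.1:ℝ) ≤ (128/31)*(Real.sin (theta z / 2)) := by
      rw [div_le_iff₀ hX0]
      nlinarith [mul_nonneg hs0 (by linarith : (0:ℝ) ≤ (z.1:ℝ) - (31/32)*(nrm z)),
        mul_nonneg hs0 hr0.le]
    have hmin0 : (0:ℝ) ≤ min ((z.2:ℝ)^2) ((4*R+1)^2) := le_min (sq_nonneg _) (by positivity)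
    have hmpsi : min (1/2 : ℝ) (psi z) ≤ (128/31)*(Real.sin (theta z / 2)) :=
      le_trans (min_le_right _ _) (le_trans hpsi_le h2YX)
    have t1 : 66*R*|(z.2:ℝ)| ≤ 66*R*(2*(nrm z)*(Real.sin (theta z / 2))) :=
      mul_le_mul_of_nonneg_left hbY (by nlinarith)
    have t3 : 132*(R*(Real.sin (theta z / 2)))*(nrm z) ≤ 132*(R*(Real.sin (theta z / 2)))*(4*R) :=
      mul_le_mul_of_nonneg_left hn (by positivity)
    have t4 : 100*R^2 * min (1/2 : ℝ) (psi z) ≤ 100*R^2*((128/31)*(Real.sin (theta z / 2))) :=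
      mul_le_mul_of_nonneg_left hmpsi (by positivity)
    calc phiR R z ≤ phi2 R z := min_le_right _ _
      _ = 66*R*|(z.2:ℝ)| - 2 * min ((z.2:ℝ)^2) ((4*R+1)^2) + 100*R^2 * min (1/2 : ℝ) (psi z) := by
          rw [phi2]
      _ ≤ 1000 * Real.sin (theta z / 2) * R^2 := by
          linarith [t1, t3, t4, hmin0, mul_nonneg hs0 (sq_nonneg R)]


/-- There exists `c < ∞` such that for all `R ≥ 1` and all
`z ∈ ℤ² ∖ ℤ₊` with `|z| ≤ 4R`: `E^z[σ_{4R} ∧ τ_+] ≤ c sin(θ_z/2) R²`. -/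
theorem stmt15_expected_exit_time :
    ∃ c : ℝ, ∀ R : ℝ, 1 ≤ R → ∀ z : V, z ∉ Zplus → nrm z ≤ 4 * R →
      expTime (contSet (4 * R)) z ≤ c * Real.sin (theta z / 2) * R ^ 2 := by
  refine ⟨1000, fun R hR z hz hn => ?_⟩
  by_cases hmem : z ∈ contSet (4 * R)
  · calc expTime (contSet (4 * R)) z ≤ phiR R z :=
        expTime_le_of_superharmonic (phiR R) hmem (phiR_nonneg hR) (fun x hx => Lap_phiR hR hx)
      _ ≤ 1000 * Real.sin (theta z / 2) * R ^ 2 := phiR_bound hR z hz hn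
  · rw [expTime_of_not_mem hmem]
    exact mul_nonneg (mul_nonneg (by norm_num) (sin_theta_half_nonneg z)) (sq_nonneg R)

end LERW
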